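/- Adiabatic theorem on a peripheral spectral block: under the spectral hypotheses on B, assume M ≥ 1 satisfies ‖exp(tB)‖ ≤ M for all t ≥ 0, and fix an index ℓ with Re(b_ℓ) = 0 (so N_ℓ = 0). Then for every T > 0 there exists a constant c ≥ 0 such that for all γ ≥ 1 and all t ∈ [0, T], ‖exp(t(γB + C))·P_ℓ − exp(t(γB + C_Z))·P_ℓ‖ ≤ c/γ. -/

import Mathlib

attribute [local instance] Matrix.linftyOpNormedRing Matrix.linftyOpNormedAlgebra

open NormedSpace Finset

noncomputable section

namespace AdiabaticPeripheralAux

variable {n m : ℕ}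

local notation "𝕄" => Matrix (Fin n) (Fin n) ℂ

lemma expDeriv (A : 𝕄) (s : ℝ) :
    HasDerivAt (fun u : ℝ => exp (u • A)) (exp (s • A) * A) s := by
  exact hasDerivAt_exp_smul_const A s

lemma expDeriv' (A : 𝕄) (s : ℝ) :
    HasDerivAt (fun u : ℝ => exp (u • A)) (A * exp (s • A)) s := by
  exact hasDerivAt_exp_smul_const' A s

lemma expCont (A : 𝕄) : Continuous (fun u : ℝ => exp (u • A)) :=
  exp_continuous.comp (continuous_id.smul continuous_const)

lemma sandwichCont (A A' W Z : 𝕄) (t : ℝ) :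
    Continuous (fun s : ℝ => exp ((t - s) • A) * W * exp (s • A') * Z) :=
  ((((expCont A).comp (continuous_const.sub continuous_id)).mul continuous_const).mul
    (expCont A')).mul continuous_const

lemma sandwichDeriv (A A' W Z : 𝕄) (t s : ℝ) :
    HasDerivAt (fun s : ℝ => exp ((t - s) • A) * W * exp (s • A') * Z)
      (exp ((t - s) • A) * (W * A' - A * W) * exp (s • A') * Z) s := by
  have h1 : HasDerivAt (fun s : ℝ => exp ((t - s) • A))
      (-(exp ((t - s) • A) * A)) s := by
    have hc : HasDerivAt (fun s : ℝ => t - s) (0 - 1) s :=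
      (hasDerivAt_const s t).sub (hasDerivAt_id s)
    have := (expDeriv A (t - s)).scomp s hc
    simp only [Function.comp_def, zero_sub, neg_one_smul] at this
    exact this
  have h2 := expDeriv' A' s
  have h := ((h1.mul_const W).mul h2).mul_const Z
  refine h.congr_deriv ?_
  simp only [mul_sub, sub_mul, neg_mul, mul_assoc, mul_add, add_mul]
  abel

lemma duhamel (A A' W Z : 𝕄) (t : ℝ) :
    ∫ s in (0:ℝ)..t, exp ((t - s) • A) * (W * A' - A * W) * exp (s • A') * Z
      = W * exp (t • A') * Z - exp (t • A) * W * Z := by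
  have hint  : @IntervalIntegrable _ PseudoMetricSpace.toUniformSpace.toTopologicalSpace _
      (fun s : ℝ => exp ((t - s) • A) * (W * A' - A * W) * exp (s • A') * Z)
      MeasureTheory.volume 0 t :=
    (sandwichCont A A' (W * A' - A * W) Z t).intervalIntegrable 0 t
  have := intervalIntegral.integral_eq_sub_of_hasDerivAt
    (f := fun s : ℝ => exp ((t - s) • A) * W * exp (s • A') * Z)
    (fun s _ => sandwichDeriv A A' W Z t s) hint
  rw [this]
  simp [exp_zero]

lemma unifBound (A D : 𝕄) (M : ℝ) (hM : 1 ≤ M)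
    (hA : ∀ s : ℝ, 0 ≤ s → ‖exp (s • A)‖ ≤ M)
    (t : ℝ) (ht : 0 ≤ t) :
    ‖exp (t • (A + D))‖ ≤ M * Real.exp (M * ‖D‖ * t) := by
  set K : ℝ := M * ‖D‖ with hK
  have hM0 : 0 ≤ M := le_trans zero_le_one hM
  have hK0 : 0 ≤ K := mul_nonneg hM0 (norm_nonneg _)
  set u : ℝ → ℝ := fun s => ‖exp (s • (A + D))‖ with hu
  have hucont : Continuous u := (expCont (A + D)).norm
  set φ : ℝ → ℝ := fun τ => ∫ s in (0:ℝ)..τ, u s with hφ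
  have hφnn : ∀ τ, 0 ≤ τ → 0 ≤ φ τ := fun τ hτ =>
    intervalIntegral.integral_nonneg hτ (fun s _ => norm_nonneg _)
  have key : ∀ τ, 0 ≤ τ → u τ ≤ M + K * φ τ := by
    intro τ hτ
    have hd := duhamel A (A + D) 1 1 τ
    simp only [one_mul, mul_one, add_sub_cancel_left] at hd
    have hrepr : exp (τ • (A + D)) = exp (τ • A)
        + ∫ s in (0:ℝ)..τ, exp ((τ - s) • A) * D * exp (s • (A + D)) := by
      rw [hd]; abel
    have hnorm : ‖∫ s in (0:ℝ)..τ, exp ((τ - s) • A) * D * exp (s • (A + D))‖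
        ≤ K * φ τ := by
      have h1 : ‖∫ s in (0:ℝ)..τ, exp ((τ - s) • A) * D * exp (s • (A + D))‖
          ≤ ∫ s in (0:ℝ)..τ, ‖exp ((τ - s) • A) * D * exp (s • (A + D))‖ :=
        intervalIntegral.norm_integral_le_integral_norm hτ
      have h2 : ∫ s in (0:ℝ)..τ, ‖exp ((τ - s) • A) * D * exp (s • (A + D))‖
          ≤ ∫ s in (0:ℝ)..τ, K * u s := by
        apply intervalIntegral.integral_mono_on hτ
        · exact (((((expCont A).comp (continuous_const.sub continuous_id)).mul
            continuous_const).mul (expCont (A + D))).norm).intervalIntegrable 0 τ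
        · exact (continuous_const.mul hucont).intervalIntegrable 0 τ
        · intro s hs
          calc ‖exp ((τ - s) • A) * D * exp (s • (A + D))‖
              ≤ ‖exp ((τ - s) • A) * D‖ * ‖exp (s • (A + D))‖ := norm_mul_le _ _
            _ ≤ ‖exp ((τ - s) • A)‖ * ‖D‖ * ‖exp (s • (A + D))‖ := by
                gcongr; exact norm_mul_le _ _
            _ ≤ M * ‖D‖ * u s :=
                mul_le_mul_of_nonneg_right
                  (mul_le_mul_of_nonneg_right
                    (hA _ (by linarith [hs.1, hs.2])) (norm_nonneg D))
                  (norm_nonneg _)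
            _ = K * u s := rfl
      calc _ ≤ _ := h1
        _ ≤ ∫ s in (0:ℝ)..τ, K * u s := h2
        _ = K * φ τ := intervalIntegral.integral_const_mul K u
    calc u τ = ‖exp (τ • (A + D))‖ := rfl
      _ ≤ ‖exp (τ • A)‖
          + ‖∫ s in (0:ℝ)..τ, exp ((τ - s) • A) * D * exp (s • (A + D))‖ := by
          rw [hrepr]; exact norm_add_le _ _
      _ ≤ M + K * φ τ := add_le_add (hA τ hτ) hnorm
  have hφderiv : ∀ τ : ℝ, HasDerivAt φ (u τ) τ := fun τ =>
    (hucont.integral_hasStrictDerivAt 0 τ).hasDerivAt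
  have hgr := norm_le_gronwallBound_of_norm_deriv_right_le
    (f := φ) (f' := u) (δ := 0) (K := K) (ε := M) (a := 0) (b := t)
    (fun τ _ => (hφderiv τ).continuousAt.continuousWithinAt)
    (fun τ _ => (hφderiv τ).hasDerivWithinAt)
    (by simp [hφ])
    (fun τ hτ => by
      have h1 : |u τ| = u τ := abs_of_nonneg (norm_nonneg _)
      have h2 : |φ τ| = φ τ := abs_of_nonneg (hφnn τ hτ.1)
      rw [Real.norm_eq_abs, Real.norm_eq_abs, h1, h2]
      linarith [key τ hτ.1])
  have hφt : φ t ≤ gronwallBound 0 K M t := by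
    have := hgr t (Set.mem_Icc.mpr ⟨ht, le_refl t⟩)
    rwa [Real.norm_eq_abs, abs_of_nonneg (hφnn t ht), sub_zero] at this
  have hfinal : u t ≤ M + K * gronwallBound 0 K M t := by
    refine le_trans (key t ht) ?_
    nlinarith [hK0, hφt]
  have htail : M + K * gronwallBound 0 K M t ≤ M * Real.exp (K * t) := by
    rcases eq_or_ne K 0 with h0 | h0
    · rw [h0]
      simp [Real.exp_zero]
    · simp only [gronwallBound_of_K_ne_0 h0, zero_mul, zero_add]
      have he := Real.exp_pos (K * t)
      have hKe : K * (M / K * (Real.exp (K * t) - 1)) = M * (Real.exp (K * t) - 1) := by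
        field_simp
      rw [hKe]; ring_nf; linarith
  calc ‖exp (t • (A + D))‖ ≤ M + K * gronwallBound 0 K M t := hfinal
    _ ≤ M * Real.exp (K * t) := htail
    _ = M * Real.exp (M * ‖D‖ * t) := rfl

section Algebra
variable (B C : Matrix (Fin n) (Fin n) ℂ)
    (b : Fin m → ℂ)
    (P N : Fin m → Matrix (Fin n) (Fin n) ℂ)
    (hPP : ∀ k l, P k * P l = if k = l then P k else 0)
    (hPN : ∀ k l, P k * N l = if k = l then N k else 0)
    (hNP : ∀ k l, N l * P k = if k = l then N k else 0)
    (hB : B = ∑ k, (b k • P k + N k))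

set_option linter.unusedSectionVars false

include hPP hPN hNP hB in
lemma lem_BP (k : Fin m) : B * P k = b k • P k + N k := by
  subst hB
  rw [Finset.sum_mul]
  have : ∀ i : Fin m, i ∈ univ → (b i • P i + N i) * P k
      = if i = k then b k • P k + N k else 0 := by
    intro i _
    rw [add_mul, smul_mul_assoc, hPP, hNP k i]
    by_cases h : i = k
    · subst h; simp
    · simp [h, Ne.symm h]
  rw [Finset.sum_congr rfl this, Finset.sum_ite_eq' univ k _]
  simp

include hPP hPN hB in
lemma lem_PB (k : Fin m) : P k * B = b k • P k + N k := by
  subst hB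
  rw [Finset.mul_sum]
  have : ∀ i : Fin m, i ∈ univ → P k * (b i • P i + N i)
      = if i = k then b k • P k + N k else 0 := by
    intro i _
    rw [mul_add, mul_smul_comm, hPP, hPN k i]
    by_cases h : i = k
    · subst h; simp
    · simp [h, Ne.symm h]
  rw [Finset.sum_congr rfl this, Finset.sum_ite_eq' univ k _]
  simp

include hPP hPN hNP hB in
lemma lem_BN (k : Fin m) : B * N k = b k • N k + N k * N k := by
  subst hB
  rw [Finset.sum_mul]
  have : ∀ i : Fin m, i ∈ univ → (b i • P i + N i) * N k
      = if i = k then b k • N k + N k * N k else 0 := by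
    intro i _
    have hNN : N i * N k = if i = k then N i * N k else 0 := by
      have hNi : N i * P i = N i := by simpa using hNP i i
      conv_lhs => rw [← hNi]
      rw [mul_assoc, hPN i k]
      by_cases h : i = k
      · subst h; simp
      · simp [h]
    rw [add_mul, smul_mul_assoc, hPN i k, hNN]
    by_cases h : i = k
    · subst h; simp
    · simp [h]
  rw [Finset.sum_congr rfl this, Finset.sum_ite_eq' univ k _]
  simp

include hPP hPN hNP hB in
lemma lem_NB (k : Fin m) : N k * B = b k • N k + N k * N k := by
  subst hB
  rw [Finset.mul_sum]
  have : ∀ i : Fin m, i ∈ univ → N k * (b i • P i + N i)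
      = if i = k then b k • N k + N k * N k else 0 := by
    intro i _
    have hNN : N k * N i = if i = k then N k * N k else 0 := by
      have hNk : N k * P k = N k := by simpa using hNP k k
      conv_lhs => rw [← hNk]
      rw [mul_assoc, hPN k i]
      by_cases h : i = k
      · subst h; simp
      · simp [h, Ne.symm h]
    rw [mul_add, mul_smul_comm, hNP i k, hNN]
    by_cases h : i = k
    · subst h; simp
    · simp [h, Ne.symm h]
  rw [Finset.sum_congr rfl this, Finset.sum_ite_eq' univ k _]
  simp

include hPP hPN hNP hB in
lemma lem_Qk (hb : Function.Injective b) (hNnil : ∀ k, IsNilpotent (N k))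
    (ℓ k : Fin m) (hkl : k ≠ ℓ) (hNl : N ℓ = 0) :
    ∃ Qk : Matrix (Fin n) (Fin n) ℂ, B * Qk - Qk * B = P k * C * P ℓ := by
  set X : Matrix (Fin n) (Fin n) ℂ := P k * C * P ℓ with hXdef
  set μ : ℂ := b k - b ℓ with hμdef
  have hμ : μ ≠ 0 := sub_ne_zero.mpr (fun h => hkl (hb h))
  have hone : IsUnit (μ • (1 : Matrix (Fin n) (Fin n) ℂ)) := by
    rw [← Algebra.algebraMap_eq_smul_one]
    exact (isUnit_iff_ne_zero.mpr hμ).map (algebraMap ℂ _)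
  have hu : IsUnit (N k + μ • (1 : Matrix (Fin n) (Fin n) ℂ)) :=
    (hNnil k).isUnit_add_right_of_commute hone ((Commute.one_right (N k)).smul_right μ)
  obtain ⟨u, huu⟩ := hu
  set v : Matrix (Fin n) (Fin n) ℂ := ↑u⁻¹ with hvdef
  have hvu : v * (↑u : Matrix (Fin n) (Fin n) ℂ) = 1 := u.inv_mul
  have hBu : Commute B (↑u : Matrix (Fin n) (Fin n) ℂ) := by
    rw [huu]
    exact Commute.add_right
      ((lem_BN B b P N hPP hPN hNP hB k).trans (lem_NB B b P N hPP hPN hNP hB k).symm)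
      ((Commute.one_right B).smul_right μ)
  have hBv : B * v = v * B := (hBu.units_inv_right).eq
  refine ⟨v * X, ?_⟩
  have hXB : X * B = b ℓ • X := by
    rw [hXdef, mul_assoc, mul_assoc, lem_PB B b P N hPP hPN hB ℓ, hNl, add_zero,
      mul_smul_comm, mul_smul_comm, ← mul_assoc]
  have h1 : B * X = b k • X + N k * (C * P ℓ) := by
    rw [hXdef, show P k * C * P ℓ = P k * (C * P ℓ) from mul_assoc _ _ _, ← mul_assoc,
      lem_BP B b P N hPP hPN hNP hB k, add_mul]
    simp only [smul_mul_assoc, mul_assoc]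
    try rfl
  have h2 : (↑u : Matrix (Fin n) (Fin n) ℂ) * X = N k * (C * P ℓ) + μ • X := by
    have hNkPk : N k * P k = N k := by simpa using hNP k k
    rw [huu, hXdef, show P k * C * P ℓ = P k * (C * P ℓ) from mul_assoc _ _ _, ← mul_assoc,
      add_mul, smul_mul_assoc, one_mul, hNkPk]
    rw [add_mul, smul_mul_assoc]
  have hBX : B * X - b ℓ • X = (↑u : Matrix (Fin n) (Fin n) ℂ) * X := by
    rw [h1, h2, hμdef]
    module
  have hcomm : B * (v * X) = v * (B * X) := by
    rw [← mul_assoc, hBv, mul_assoc]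
  calc B * (v * X) - (v * X) * B
      = v * (B * X) - v * (b ℓ • X) := by
        rw [hcomm, mul_assoc, hXB, mul_smul_comm]
    _ = v * (B * X - b ℓ • X) := by rw [mul_sub]
    _ = v * ((↑u : Matrix (Fin n) (Fin n) ℂ) * X) := by rw [hBX]
    _ = X := by rw [← mul_assoc, hvu, one_mul]

include hPP hPN hNP hB in
lemma lem_Q (hb : Function.Injective b) (hNnil : ∀ k, IsNilpotent (N k))
    (hPsum : ∑ k, P k = 1) (ℓ : Fin m) (hNl : N ℓ = 0) :
    ∃ Q : Matrix (Fin n) (Fin n) ℂ, B * Q - Q * B = C * P ℓ - P ℓ * C * P ℓ := by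
  have hex : ∀ k : Fin m, ∃ Qk : Matrix (Fin n) (Fin n) ℂ,
      k ≠ ℓ → B * Qk - Qk * B = P k * C * P ℓ := by
    intro k
    by_cases h : k ≠ ℓ
    · obtain ⟨Qk, hQk⟩ := lem_Qk B C b P N hPP hPN hNP hB hb hNnil ℓ k h hNl
      exact ⟨Qk, fun _ => hQk⟩
    · exact ⟨0, fun h' => absurd h' h⟩
  choose f hf using hex
  refine ⟨∑ k ∈ univ.erase ℓ, f k, ?_⟩
  rw [Finset.mul_sum, Finset.sum_mul, ← Finset.sum_sub_distrib]
  rw [Finset.sum_congr rfl (fun k hk => hf k (Finset.ne_of_mem_erase hk))]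
  have hsplit : ∑ k ∈ univ.erase ℓ, P k * C * P ℓ
      = (∑ k, P k * C * P ℓ) - P ℓ * C * P ℓ :=
    eq_sub_of_add_eq (Finset.sum_erase_add univ _ (Finset.mem_univ ℓ))
  rw [hsplit, ← Finset.sum_mul, ← Finset.sum_mul, hPsum, one_mul]

include hPP in
lemma lem_PCZ (ℓ : Fin m) (hℓm : (b ℓ).re = 0) (CZ : Matrix (Fin n) (Fin n) ℂ)
    (hCZ : CZ = ∑ k ∈ univ.filter fun k => (b k).re = 0, P k * C * P k) :
    P ℓ * CZ = P ℓ * C * P ℓ ∧ CZ * P ℓ = P ℓ * C * P ℓ := by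
  subst hCZ
  have hmem : ℓ ∈ univ.filter fun k => (b k).re = 0 :=
    Finset.mem_filter.mpr ⟨Finset.mem_univ ℓ, hℓm⟩
  constructor
  · rw [Finset.mul_sum]
    rw [Finset.sum_eq_single_of_mem ℓ hmem]
    · rw [← mul_assoc, ← mul_assoc, hPP ℓ ℓ]; simp
    · intro k _ hkl
      rw [← mul_assoc, ← mul_assoc, hPP ℓ k]
      simp [Ne.symm hkl]
  · rw [Finset.sum_mul]
    rw [Finset.sum_eq_single_of_mem ℓ hmem]
    · rw [mul_assoc, hPP ℓ ℓ]; simp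
    · intro k _ hkl
      rw [mul_assoc, hPP k ℓ]
      simp [hkl]

end Algebra

end AdiabaticPeripheralAux

open AdiabaticPeripheralAux in
set_option maxHeartbeats 1000000 in
/-- Adiabatic theorem on a peripheral spectral block. -/
theorem adiabatic_peripheral_block
    {n m : ℕ} (hn : 1 ≤ n) (hm : 1 ≤ m)
    (B C : Matrix (Fin n) (Fin n) ℂ)
    (b : Fin m → ℂ) (hb : Function.Injective b)
    (P N : Fin m → Matrix (Fin n) (Fin n) ℂ)
    (hPP : ∀ k l, P k * P l = if k = l then P k else 0)
    (hPsum : ∑ k, P k = 1)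
    (hPN : ∀ k l, P k * N l = if k = l then N k else 0)
    (hNP : ∀ k l, N l * P k = if k = l then N k else 0)
    (hNnil : ∀ k, IsNilpotent (N k))
    (hB : B = ∑ k, (b k • P k + N k))
    (hRe : ∀ k, (b k).re ≤ 0)
    (hsemi : ∀ k, (b k).re = 0 → N k = 0)
    (M : ℝ) (hM : 1 ≤ M)
    (hMbound : ∀ t : ℝ, 0 ≤ t → ‖exp (t • B)‖ ≤ M)
    (ℓ : Fin m) (hℓ : (b ℓ).re = 0)
    (CZ : Matrix (Fin n) (Fin n) ℂ)
    (hCZ : CZ = ∑ k ∈ univ.filter fun k => (b k).re = 0, P k * C * P k) :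
    ∀ T > (0 : ℝ), ∃ c ≥ (0 : ℝ), ∀ γ ≥ (1 : ℝ), ∀ t ∈ Set.Icc (0 : ℝ) T,
      ‖exp (t • ((γ : ℂ) • B + C)) * P ℓ - exp (t • ((γ : ℂ) • B + CZ)) * P ℓ‖
        ≤ c / γ := by
  intro T hT
  have hM0 : (0:ℝ) ≤ M := le_trans zero_le_one hM
  have hNl : N ℓ = 0 := hsemi ℓ hℓ
  have hBP : B * P ℓ = b ℓ • P ℓ := by
    rw [lem_BP B b P N hPP hPN hNP hB ℓ, hNl, add_zero]
  have hPB : P ℓ * B = b ℓ • P ℓ := by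
    rw [lem_PB B b P N hPP hPN hB ℓ, hNl, add_zero]
  obtain ⟨hPCZ, hCZP⟩ := lem_PCZ C b P hPP ℓ hℓ CZ hCZ
  obtain ⟨Q, hQ⟩ := lem_Q B C b P N hPP hPN hNP hB hb hNnil hPsum ℓ hNl
  have hPPl : P ℓ * P ℓ = P ℓ := by simpa using hPP ℓ ℓ
  set KU : ℝ := M * Real.exp (M * ‖C‖ * T) with hKU
  set KV : ℝ := M * Real.exp (M * ‖CZ‖ * T) with hKV
  have hKU0 : 0 ≤ KU := mul_nonneg hM0 (Real.exp_nonneg _)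
  have hKV0 : 0 ≤ KV := mul_nonneg hM0 (Real.exp_nonneg _)
  refine ⟨‖Q‖ * KV * ‖P ℓ‖ + KU * ‖Q‖ * ‖P ℓ‖
    + T * (KU * ‖Q * CZ - C * Q‖ * (KV * ‖P ℓ‖)), by positivity, ?_⟩
  intro γ hγ t ht
  obtain ⟨ht0, htT⟩ := ht
  have hγ0 : (0:ℝ) < γ := lt_of_lt_of_le one_pos hγ
  set Aγ : Matrix (Fin n) (Fin n) ℂ := (γ:ℂ) • B + C with hAγ
  set A'γ : Matrix (Fin n) (Fin n) ℂ := (γ:ℂ) • B + CZ with hA'γ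
  -- uniform bound on the scaled group
  have hrsmul : ∀ (r : ℝ) (X : Matrix (Fin n) (Fin n) ℂ), r • X = (r:ℂ) • X := by
    intro r X
    rw [← algebraMap_smul ℂ r X, Complex.coe_algebraMap]
  have hMb : ∀ s : ℝ, 0 ≤ s → ‖exp (s • ((γ:ℂ) • B))‖ ≤ M := by
    intro s hs
    have heq : s • ((γ:ℂ) • B) = (s * γ) • B := by
      rw [hrsmul s, hrsmul (s * γ), smul_smul]
      norm_cast
    rw [heq]
    exact hMbound (s * γ) (mul_nonneg hs (le_of_lt hγ0))
  have hU : ∀ τ : ℝ, 0 ≤ τ → τ ≤ T → ‖exp (τ • Aγ)‖ ≤ KU := by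
    intro τ h0 hle
    refine le_trans (unifBound ((γ:ℂ) • B) C M hM hMb τ h0) ?_
    rw [hKU]
    have : M * ‖C‖ * τ ≤ M * ‖C‖ * T :=
      mul_le_mul_of_nonneg_left hle (mul_nonneg hM0 (norm_nonneg _))
    exact mul_le_mul_of_nonneg_left (Real.exp_le_exp.mpr this) hM0
  have hV : ∀ τ : ℝ, 0 ≤ τ → τ ≤ T → ‖exp (τ • A'γ)‖ ≤ KV := by
    intro τ h0 hle
    refine le_trans (unifBound ((γ:ℂ) • B) CZ M hM hMb τ h0) ?_
    rw [hKV]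
    have : M * ‖CZ‖ * τ ≤ M * ‖CZ‖ * T :=
      mul_le_mul_of_nonneg_left hle (mul_nonneg hM0 (norm_nonneg _))
    exact mul_le_mul_of_nonneg_left (Real.exp_le_exp.mpr this) hM0
  -- commutation of P ℓ with A'γ and its exponentials
  have hPA' : Commute (P ℓ) A'γ := by
    rw [hA'γ]
    exact Commute.add_right
      (Commute.smul_right (show Commute (P ℓ) B from hPB.trans hBP.symm) (γ:ℂ))
      (show Commute (P ℓ) CZ from hPCZ.trans hCZP.symm)
  have hPexp : ∀ s : ℝ, P ℓ * exp (s • A'γ) = exp (s • A'γ) * P ℓ := by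
    intro s
    exact ((hPA'.smul_right s).exp_right).eq
  -- rewriting the perturbation against the block
  have hswap : ∀ s : ℝ, (P ℓ * C * P ℓ - C * P ℓ) * (exp (s • A'γ) * P ℓ)
      = (CZ - C) * (exp (s • A'γ) * P ℓ) := by
    intro s
    have h1 : (CZ - C) * P ℓ = P ℓ * C * P ℓ - C * P ℓ := by
      rw [sub_mul, hCZP]
    have h2 : P ℓ * (exp (s • A'γ) * P ℓ) = exp (s • A'γ) * P ℓ := by
      rw [← mul_assoc, hPexp s, mul_assoc, hPPl]
    calc (P ℓ * C * P ℓ - C * P ℓ) * (exp (s • A'γ) * P ℓ)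
        = ((CZ - C) * P ℓ) * (exp (s • A'γ) * P ℓ) := by rw [h1]
      _ = (CZ - C) * (P ℓ * (exp (s • A'γ) * P ℓ)) := by rw [mul_assoc]
      _ = (CZ - C) * (exp (s • A'γ) * P ℓ) := by rw [h2]
  -- the two Duhamel identities
  have hi := duhamel Aγ A'γ 1 (P ℓ) t
  simp only [one_mul, mul_one] at hi
  have hii := duhamel Aγ A'γ Q (P ℓ) t
  -- the commutator identity for Q
  have hQA' : Q * A'γ - Aγ * Q = (γ:ℂ) • (P ℓ * C * P ℓ - C * P ℓ) + (Q * CZ - C * Q) := by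
    rw [hAγ, hA'γ]
    have hexpand : Q * ((γ:ℂ) • B + CZ) - ((γ:ℂ) • B + C) * Q
        = (γ:ℂ) • (Q * B - B * Q) + (Q * CZ - C * Q) := by
      rw [mul_add, add_mul, mul_smul_comm, smul_mul_assoc]
      module
    rw [hexpand]
    have h4 : Q * B - B * Q = P ℓ * C * P ℓ - C * P ℓ := by
      rw [← neg_sub, hQ, neg_sub]
    rw [h4]
  -- pointwise integrand identity
  have hd1 : A'γ - Aγ = CZ - C := by
    rw [hAγ, hA'γ]; abel
  have hpt : ∀ s ∈ Set.uIcc (0:ℝ) t,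
      exp ((t - s) • Aγ) * (Q * A'γ - Aγ * Q) * exp (s • A'γ) * P ℓ
      = (γ:ℂ) • (exp ((t - s) • Aγ) * (A'γ - Aγ) * exp (s • A'γ) * P ℓ)
        + exp ((t - s) • Aγ) * (Q * CZ - C * Q) * exp (s • A'γ) * P ℓ := by
    intro s _
    have hcore : exp ((t - s) • Aγ) * (P ℓ * C * P ℓ - C * P ℓ) * exp (s • A'γ) * P ℓ
        = exp ((t - s) • Aγ) * (CZ - C) * exp (s • A'γ) * P ℓ := by
      rw [mul_assoc, mul_assoc, hswap s, ← mul_assoc, ← mul_assoc]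
    rw [hQA', hd1]
    rw [mul_add, add_mul, add_mul, mul_smul_comm, smul_mul_assoc, smul_mul_assoc, hcore]
  -- integrate
  have hint1  : @IntervalIntegrable _ PseudoMetricSpace.toUniformSpace.toTopologicalSpace _
      (fun s : ℝ => (γ:ℂ) • (exp ((t - s) • Aγ) * (A'γ - Aγ) * exp (s • A'γ) * P ℓ))
      MeasureTheory.volume 0 t :=
    ((sandwichCont Aγ A'γ (A'γ - Aγ) (P ℓ) t).const_smul (γ:ℂ)).intervalIntegrable 0 t
  have hint2  : @IntervalIntegrable _ PseudoMetricSpace.toUniformSpace.toTopologicalSpace _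
      (fun s : ℝ => exp ((t - s) • Aγ) * (Q * CZ - C * Q) * exp (s • A'γ) * P ℓ)
      MeasureTheory.volume 0 t :=
    (sandwichCont Aγ A'γ (Q * CZ - C * Q) (P ℓ) t).intervalIntegrable 0 t
  have hsplit : Q * exp (t • A'γ) * P ℓ - exp (t • Aγ) * Q * P ℓ
      = (γ:ℂ) • (exp (t • A'γ) * P ℓ - exp (t • Aγ) * P ℓ)
        + ∫ s in (0:ℝ)..t, exp ((t - s) • Aγ) * (Q * CZ - C * Q) * exp (s • A'γ) * P ℓ := by
    rw [← hii, intervalIntegral.integral_congr hpt,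
      intervalIntegral.integral_add hint1 hint2, intervalIntegral.integral_smul, hi]
  -- final bound
  have hkey : (γ:ℂ) • (exp (t • Aγ) * P ℓ - exp (t • A'γ) * P ℓ)
      = exp (t • Aγ) * Q * P ℓ - Q * exp (t • A'γ) * P ℓ
        + ∫ s in (0:ℝ)..t, exp ((t - s) • Aγ) * (Q * CZ - C * Q) * exp (s • A'γ) * P ℓ := by
    have hE : (∫ s in (0:ℝ)..t, exp ((t - s) • Aγ) * (Q * CZ - C * Q) * exp (s • A'γ) * P ℓ)
        = Q * exp (t • A'γ) * P ℓ - exp (t • Aγ) * Q * P ℓ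
          - (γ:ℂ) • (exp (t • A'γ) * P ℓ - exp (t • Aγ) * P ℓ) := by
      rw [eq_sub_iff_add_eq, add_comm, ← hsplit]
    rw [hE]
    simp only [smul_sub]
    abel
  have hEbound : ‖∫ s in (0:ℝ)..t, exp ((t - s) • Aγ) * (Q * CZ - C * Q) * exp (s • A'γ) * P ℓ‖
      ≤ T * (KU * ‖Q * CZ - C * Q‖ * (KV * ‖P ℓ‖)) := by
    have hb1 : ∀ s ∈ Set.uIoc (0:ℝ) t,
        ‖exp ((t - s) • Aγ) * (Q * CZ - C * Q) * exp (s • A'γ) * P ℓ‖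
        ≤ KU * ‖Q * CZ - C * Q‖ * (KV * ‖P ℓ‖) := by
      intro s hs
      rw [Set.uIoc_of_le ht0] at hs
      have hs0 : 0 ≤ s := le_of_lt hs.1
      have hsT : s ≤ T := le_trans hs.2 htT
      have hts0 : 0 ≤ t - s := by linarith [hs.2]
      have htsT : t - s ≤ T := by linarith
      calc ‖exp ((t - s) • Aγ) * (Q * CZ - C * Q) * exp (s • A'γ) * P ℓ‖
          ≤ ‖exp ((t - s) • Aγ) * (Q * CZ - C * Q) * exp (s • A'γ)‖ * ‖P ℓ‖ :=
            norm_mul_le _ _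
        _ ≤ ‖exp ((t - s) • Aγ) * (Q * CZ - C * Q)‖ * ‖exp (s • A'γ)‖ * ‖P ℓ‖ := by
            gcongr; exact norm_mul_le _ _
        _ ≤ ‖exp ((t - s) • Aγ)‖ * ‖Q * CZ - C * Q‖ * ‖exp (s • A'γ)‖ * ‖P ℓ‖ := by
            gcongr; exact norm_mul_le _ _
        _ ≤ KU * ‖Q * CZ - C * Q‖ * KV * ‖P ℓ‖ := by
            gcongr
            · exact hU _ hts0 htsT
            · exact hV _ hs0 hsT
        _ = KU * ‖Q * CZ - C * Q‖ * (KV * ‖P ℓ‖) := by ring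
    have := intervalIntegral.norm_integral_le_of_norm_le_const hb1
    rw [sub_zero, abs_of_nonneg ht0] at this
    calc _ ≤ KU * ‖Q * CZ - C * Q‖ * (KV * ‖P ℓ‖) * t := this
      _ ≤ KU * ‖Q * CZ - C * Q‖ * (KV * ‖P ℓ‖) * T :=
          mul_le_mul_of_nonneg_left htT (by positivity)
      _ = T * (KU * ‖Q * CZ - C * Q‖ * (KV * ‖P ℓ‖)) := by ring
  have hnorm1 : ‖exp (t • Aγ) * Q * P ℓ‖ ≤ KU * ‖Q‖ * ‖P ℓ‖ := by
    calc ‖exp (t • Aγ) * Q * P ℓ‖ ≤ ‖exp (t • Aγ) * Q‖ * ‖P ℓ‖ := norm_mul_le _ _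
      _ ≤ ‖exp (t • Aγ)‖ * ‖Q‖ * ‖P ℓ‖ := by gcongr; exact norm_mul_le _ _
      _ ≤ KU * ‖Q‖ * ‖P ℓ‖ := by gcongr; exact hU t ht0 htT
  have hnorm2 : ‖Q * exp (t • A'γ) * P ℓ‖ ≤ ‖Q‖ * KV * ‖P ℓ‖ := by
    calc ‖Q * exp (t • A'γ) * P ℓ‖ ≤ ‖Q * exp (t • A'γ)‖ * ‖P ℓ‖ := norm_mul_le _ _
      _ ≤ ‖Q‖ * ‖exp (t • A'γ)‖ * ‖P ℓ‖ := by gcongr; exact norm_mul_le _ _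
      _ ≤ ‖Q‖ * KV * ‖P ℓ‖ := by gcongr; exact hV t ht0 htT
  have hγnorm : ‖(γ:ℂ) • (exp (t • Aγ) * P ℓ - exp (t • A'γ) * P ℓ)‖
      = γ * ‖exp (t • Aγ) * P ℓ - exp (t • A'γ) * P ℓ‖ := by
    rw [norm_smul, Complex.norm_real, Real.norm_eq_abs, abs_of_pos hγ0]
  have hmain : γ * ‖exp (t • Aγ) * P ℓ - exp (t • A'γ) * P ℓ‖
      ≤ ‖Q‖ * KV * ‖P ℓ‖ + KU * ‖Q‖ * ‖P ℓ‖
        + T * (KU * ‖Q * CZ - C * Q‖ * (KV * ‖P ℓ‖)) := by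
    rw [← hγnorm, hkey]
    calc ‖exp (t • Aγ) * Q * P ℓ - Q * exp (t • A'γ) * P ℓ
          + ∫ s in (0:ℝ)..t, exp ((t - s) • Aγ) * (Q * CZ - C * Q) * exp (s • A'γ) * P ℓ‖
        ≤ ‖exp (t • Aγ) * Q * P ℓ - Q * exp (t • A'γ) * P ℓ‖
          + ‖∫ s in (0:ℝ)..t, exp ((t - s) • Aγ) * (Q * CZ - C * Q) * exp (s • A'γ) * P ℓ‖ :=
          norm_add_le _ _
      _ ≤ ‖exp (t • Aγ) * Q * P ℓ‖ + ‖Q * exp (t • A'γ) * P ℓ‖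
          + ‖∫ s in (0:ℝ)..t, exp ((t - s) • Aγ) * (Q * CZ - C * Q) * exp (s • A'γ) * P ℓ‖ := by
          gcongr
          exact norm_sub_le _ _
      _ ≤ KU * ‖Q‖ * ‖P ℓ‖ + ‖Q‖ * KV * ‖P ℓ‖
          + T * (KU * ‖Q * CZ - C * Q‖ * (KV * ‖P ℓ‖)) := by
          exact add_le_add (add_le_add hnorm1 hnorm2) hEbound
      _ = ‖Q‖ * KV * ‖P ℓ‖ + KU * ‖Q‖ * ‖P ℓ‖
          + T * (KU * ‖Q * CZ - C * Q‖ * (KV * ‖P ℓ‖)) := by ring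
  rw [le_div_iff₀ hγ0]
  calc ‖exp (t • Aγ) * P ℓ - exp (t • A'γ) * P ℓ‖ * γ
      = γ * ‖exp (t • Aγ) * P ℓ - exp (t • A'γ) * P ℓ‖ := by ring
    _ ≤ _ := hmain
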